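/- The number of elements of the interval [1, w] in the absolute order on S_n, where w = (1 2 ... n), equals the Catalan number C_n = (1/(n+1)) · binomial(2n, n). -/

import Mathlib

open Equiv

noncomputable def wordLen {G : Type*} [Group G] (R : Set G) (g : G) : ℕ :=
  sInf {k | ∃ l : List G, (∀ x ∈ l, x ∈ R) ∧ l.length = k ∧ l.prod = g}

/-- Reflection length with respect to the set of all transpositions. -/
noncomputable def reflLen {n : ℕ} (σ : Perm (Fin n)) : ℕ :=
  wordLen {τ : Perm (Fin n) | τ.IsSwap} σ

/-- Absolute order on the symmetric group. -/
noncomputable def absLe {n : ℕ} (u v : Perm (Fin n)) : Prop :=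
  reflLen u + reflLen (u⁻¹ * v) = reflLen v

open Module

namespace AbsCat

set_option linter.unusedSectionVars false

variable {α : Type*} [Fintype α] [DecidableEq α]

/-- The fixed subspace of the permutation action on functions. -/
def fixSub (σ : Perm α) : Submodule ℚ (α → ℚ) where
  carrier := {f | ∀ x, f (σ x) = f x}
  add_mem' := by intro f g hf hg x; simp [hf x, hg x]
  zero_mem' := by intro x; rfl
  smul_mem' := by intro c f hf x; simp [hf x]

lemma mem_fixSub {σ : Perm α} {f : α → ℚ} : f ∈ fixSub σ ↔ ∀ x, f (σ x) = f x := Iff.rfl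

/-- rank of fixed space -/
noncomputable def rr (σ : Perm α) : ℕ := finrank ℚ (fixSub σ)

noncomputable def dd (σ : Perm α) : ℕ := Fintype.card α - rr σ

lemma rr_le_card (σ : Perm α) : rr σ ≤ Fintype.card α := by
  have := Submodule.finrank_le (fixSub σ)
  simpa [rr, Module.finrank_fintype_fun_eq_card] using this

lemma fixSub_one : fixSub (1 : Perm α) = ⊤ := by
  ext f; simp [mem_fixSub]

lemma rr_one : rr (1 : Perm α) = Fintype.card α := by
  rw [rr, fixSub_one, finrank_top, Module.finrank_fintype_fun_eq_card]
  
lemma dd_one : dd (1 : Perm α) = 0 := by simp [dd, rr_one]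

lemma inf_fix_le_fix_mul (π ρ : Perm α) : fixSub π ⊓ fixSub ρ ≤ fixSub (π * ρ) := by
  rintro f ⟨h1, h2⟩ x
  simp only [Perm.mul_apply]
  rw [h1, h2]

/-- the evaluation-difference functional -/
noncomputable def ev (x y : α) : (α → ℚ) →ₗ[ℚ] ℚ :=
  (LinearMap.proj x : ((_ : α) → ℚ) →ₗ[ℚ] ℚ) - (LinearMap.proj y : ((_ : α) → ℚ) →ₗ[ℚ] ℚ)

@[simp] lemma ev_apply (x y : α) (f : α → ℚ) : ev x y f = f x - f y := rfl

lemma finrank_inf_ker {V : Type*} [AddCommGroup V] [Module ℚ V] [FiniteDimensional ℚ V]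
    (p : Submodule ℚ V) (φ : V →ₗ[ℚ] ℚ) (h : ∃ f ∈ p, φ f ≠ 0) :
    finrank ℚ ↥(p ⊓ LinearMap.ker φ) + 1 = finrank ℚ ↥p := by
  have hrn := LinearMap.finrank_range_add_finrank_ker (φ.domRestrict p)
  have hker : LinearMap.ker (φ.domRestrict p) = (p ⊓ LinearMap.ker φ).comap p.subtype := by
    ext ⟨f, hf⟩
    simp [LinearMap.mem_ker, hf]
  have hrange : finrank ℚ ↥(LinearMap.range (φ.domRestrict p)) = 1 := by
    obtain ⟨f, hfp, hf⟩ := h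
    have : LinearMap.range (φ.domRestrict p) = ⊤ := by
      rw [LinearMap.range_eq_top]
      intro c
      refine ⟨(c / φ f) • ⟨f, hfp⟩, ?_⟩
      simp [div_mul_cancel₀, hf]
    rw [this, finrank_top, finrank_self]
  have hcomap : finrank ℚ ↥((p ⊓ LinearMap.ker φ).comap p.subtype) =
      finrank ℚ ↥(p ⊓ LinearMap.ker φ) := by
    apply LinearEquiv.finrank_eq
    exact (Submodule.comapSubtypeEquivOfLe inf_le_left)
  rw [hker, hcomap, hrange] at hrn
  omega


/-- indicator function of a set -/
def indic (s : Set α) [DecidablePred (· ∈ s)] : α → ℚ := fun x => if x ∈ s then 1 else 0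

lemma indic_mem_fixSub {σ : Perm α} {s : Set α} [DecidablePred (· ∈ s)]
    (h : ∀ z, σ z ∈ s ↔ z ∈ s) : indic s ∈ fixSub σ := by
  intro x
  simp only [indic]
  rw [if_congr (h x) rfl rfl]

lemma single_mem_fixSub {σ : Perm α} {x : α} (hx : σ x = x) :
    indic {x} ∈ fixSub σ := by
  apply indic_mem_fixSub
  intro z
  simp only [Set.mem_singleton_iff]
  constructor
  · intro h; exact σ.injective (h.trans hx.symm)
  · intro h; rw [h, hx]

@[simp] lemma indic_self (x : α) : indic {x} x = 1 := by simp [indic]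

lemma indic_ne {x y : α} (h : y ≠ x) : indic {x} y = 0 := by simp [indic, h]

lemma fixSub_swap {a b : α} (hab : a ≠ b) :
    fixSub (swap a b) = LinearMap.ker (ev a b) := by
  ext f
  constructor
  · intro h
    have := h a
    rw [swap_apply_left] at this
    simp [LinearMap.mem_ker, this]
  · intro h
    have hfab : f a = f b := by simpa [sub_eq_zero] using h
    intro z
    rcases eq_or_ne z a with rfl | hza
    · rw [swap_apply_left, hfab]
    rcases eq_or_ne z b with rfl | hzb
    · rw [swap_apply_right, hfab]
    · rw [swap_apply_of_ne_of_ne hza hzb]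

lemma rr_swap_add (a b : α) (hab : a ≠ b) : rr (swap a b) + 1 = Fintype.card α := by
  have h := finrank_inf_ker (⊤ : Submodule ℚ (α → ℚ)) (ev a b)
    ⟨indic {a}, trivial, by simp [indic_ne hab.symm]⟩
  rw [top_inf_eq, finrank_top, Module.finrank_fintype_fun_eq_card] at h
  rw [rr, fixSub_swap hab, h]

lemma dd_swap {a b : α} (hab : a ≠ b) : dd (swap a b) = 1 := by
  have h := rr_swap_add a b hab
  have h2 := rr_le_card (swap a b)
  have hcard : 1 ≤ Fintype.card α := by
    exact Fintype.card_pos_iff.mpr ⟨a⟩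
  simp only [dd]; omega

lemma fixSub_swap_mul {σ : Perm α} {x y : α} (hx : σ x = x) (hxy : y ≠ x) :
    fixSub (swap x y * σ) = fixSub σ ⊓ LinearMap.ker (ev x y) := by
  ext f
  constructor
  · intro h
    have hfxy : f x = f y := by
      have := h x
      rw [Perm.mul_apply, hx, swap_apply_left] at this
      exact this.symm
    have hswap : ∀ w, f (swap x y w) = f w := by
      intro w
      rcases eq_or_ne w x with rfl | hwx
      · rw [swap_apply_left, hfxy]
      rcases eq_or_ne w y with rfl | hwy
      · rw [swap_apply_right, hfxy]
      · rw [swap_apply_of_ne_of_ne hwx hwy]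
    constructor
    · intro z
      have hz := h z
      rw [Perm.mul_apply, hswap (σ z)] at hz
      exact hz
    · simp [LinearMap.mem_ker, hfxy]
  · rintro ⟨h1, h2⟩
    have hfxy : f x = f y := by simpa [sub_eq_zero] using h2
    have hswap : ∀ w, f (swap x y w) = f w := by
      intro w
      rcases eq_or_ne w x with rfl | hwx
      · rw [swap_apply_left, hfxy]
      rcases eq_or_ne w y with rfl | hwy
      · rw [swap_apply_right, hfxy]
      · rw [swap_apply_of_ne_of_ne hwx hwy]
    intro z
    rw [Perm.mul_apply, hswap (σ z), h1 z]

/-- KEY: inserting a fixed point into a cycle via a swap drops the fixed rank by 1. -/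
lemma rr_swap_mul_fixed {σ : Perm α} {x y : α} (hx : σ x = x) (hxy : y ≠ x) :
    rr (swap x y * σ) + 1 = rr σ := by
  have h := finrank_inf_ker (fixSub σ) (ev x y)
    ⟨indic {x}, single_mem_fixSub hx, by simp [indic_ne hxy]⟩
  rw [rr, rr, fixSub_swap_mul hx hxy, h]

lemma dd_swap_mul_fixed {σ : Perm α} {x y : α} (hx : σ x = x) (hxy : y ≠ x) :
    dd (swap x y * σ) = dd σ + 1 := by
  have h := rr_swap_mul_fixed hx hxy
  have h2 := rr_le_card σ
  have h3 := rr_le_card (swap x y * σ)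
  simp only [dd]; omega

lemma rr_mul_ge (π ρ : Perm α) : rr π + rr ρ ≤ Fintype.card α + rr (π * ρ) := by
  have hsup := Submodule.finrank_sup_add_finrank_inf_eq (fixSub π) (fixSub ρ)
  have hsuple : finrank ℚ ↥(fixSub π ⊔ fixSub ρ) ≤ Fintype.card α := by
    have := Submodule.finrank_le (fixSub π ⊔ fixSub ρ)
    simpa [Module.finrank_fintype_fun_eq_card] using this
  have hinf : finrank ℚ ↥(fixSub π ⊓ fixSub ρ) ≤ rr (π * ρ) :=
    Submodule.finrank_mono (inf_fix_le_fix_mul π ρ)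
  simp only [rr] at *
  omega

lemma dd_mul_le (π ρ : Perm α) : dd (π * ρ) ≤ dd π + dd ρ := by
  have h := rr_mul_ge π ρ
  have := rr_le_card π
  have := rr_le_card ρ
  have := rr_le_card (π * ρ)
  simp only [dd]; omega

/-- If the defect is additive, the fixed space of the product is inside both factors'. -/
lemma fix_le_of_dd_add {π ρ : Perm α} (h : dd π + dd ρ = dd (π * ρ)) :
    fixSub (π * ρ) ≤ fixSub π ⊓ fixSub ρ := by
  have hsup := Submodule.finrank_sup_add_finrank_inf_eq (fixSub π) (fixSub ρ)
  have hsuple : finrank ℚ ↥(fixSub π ⊔ fixSub ρ) ≤ Fintype.card α := by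
    have := Submodule.finrank_le (fixSub π ⊔ fixSub ρ)
    simpa [Module.finrank_fintype_fun_eq_card] using this
  have h1 := rr_le_card π
  have h2 := rr_le_card ρ
  have h3 := rr_le_card (π * ρ)
  have hle : finrank ℚ ↥(fixSub (π * ρ)) ≤ finrank ℚ ↥(fixSub π ⊓ fixSub ρ) := by
    simp only [dd] at h
    simp only [rr] at *
    omega
  rw [Submodule.eq_of_le_of_finrank_le (inf_fix_le_fix_mul π ρ) hle]


noncomputable def rl (σ : Perm α) : ℕ := wordLen {τ : Perm α | τ.IsSwap} σ

def wordSet (σ : Perm α) : Set ℕ :=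
  {k | ∃ l : List (Perm α), (∀ x ∈ l, x ∈ {τ : Perm α | τ.IsSwap}) ∧ l.length = k ∧ l.prod = σ}

lemma rl_def (σ : Perm α) : rl σ = sInf (wordSet σ) := rfl

lemma wordSet_nonempty (σ : Perm α) : (wordSet σ).Nonempty := by
  obtain ⟨l, hprod, hswap⟩ := (Equiv.Perm.truncSwapFactors σ).out
  exact ⟨l.length, l, hswap, rfl, hprod⟩

lemma dd_list_prod (l : List (Perm α)) (h : ∀ τ ∈ l, τ.IsSwap) : dd l.prod ≤ l.length := by
  induction l with
  | nil => simpa using dd_one.le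
  | cons τ l ih =>
    rw [List.prod_cons]
    calc dd (τ * l.prod) ≤ dd τ + dd l.prod := dd_mul_le _ _
    _ ≤ 1 + l.length := by
        obtain ⟨a, b, hab, rfl⟩ := h τ List.mem_cons_self
        exact Nat.add_le_add (dd_swap hab).le (ih fun x hx => h x (List.mem_cons_of_mem _ hx))
    _ = (τ :: l).length := by simp [Nat.add_comm]

lemma dd_le_rl (σ : Perm α) : dd σ ≤ rl σ := by
  obtain ⟨l, hswap, hlen, hprod⟩ := Nat.sInf_mem (wordSet_nonempty σ)
  rw [rl_def]
  calc dd σ = dd l.prod := by rw [hprod]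
  _ ≤ l.length := dd_list_prod l hswap
  _ = _ := hlen

lemma rl_one : rl (1 : Perm α) = 0 := by
  rw [rl_def]
  exact Nat.eq_zero_of_le_zero (Nat.sInf_le ⟨[], by simp, rfl, rfl⟩)

lemma rl_le_dd_aux : ∀ (k : ℕ) (σ : Perm α), σ.support.card ≤ k → rl σ ≤ dd σ := by
  intro k
  induction k with
  | zero =>
    intro σ hσ
    have : σ = 1 := by
      rwa [Nat.le_zero, Finset.card_eq_zero, Equiv.Perm.support_eq_empty_iff] at hσ
    rw [this, rl_one]
    exact Nat.zero_le _
  | succ k ih =>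
    intro σ hσ
    rcases eq_or_ne σ 1 with rfl | hne
    · rw [rl_one]; exact Nat.zero_le _
    obtain ⟨x, hx⟩ : ∃ x, σ x ≠ x := by
      by_contra h
      push_neg at h
      exact hne (Equiv.ext h)
    set σ' := swap x (σ x) * σ with hσ'
    have hfix : σ' x = x := by
      simp [hσ', Equiv.Perm.mul_apply, swap_apply_right]
    have hrec : σ = swap x (σ x) * σ' := by
      rw [hσ', ← mul_assoc, swap_mul_self, one_mul]
    have hdd : dd σ = dd σ' + 1 := by
      rw [hrec]
      exact dd_swap_mul_fixed hfix hx
    have hsupp : σ'.support.card < σ.support.card := Equiv.Perm.card_support_swap_mul hx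
    have hrl' : rl σ' ≤ dd σ' := ih σ' (by omega)
    have hstep : rl σ ≤ rl σ' + 1 := by
      obtain ⟨l, hswap, hlen, hprod⟩ := Nat.sInf_mem (wordSet_nonempty σ')
      rw [rl_def]
      apply Nat.sInf_le
      refine ⟨swap x (σ x) :: l, ?_, by simp [hlen, rl_def], by rw [List.prod_cons, hprod, ← hrec]⟩
      intro τ hτ
      rcases List.mem_cons.mp hτ with rfl | hτ
      · exact ⟨x, σ x, Ne.symm hx, rfl⟩
      · exact hswap τ hτ
    omega

theorem rl_eq_dd (σ : Perm α) : rl σ = dd σ :=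
  le_antisymm (rl_le_dd_aux σ.support.card σ le_rfl) (dd_le_rl σ)

theorem absLe_iff_dd {n : ℕ} (u v : Perm (Fin n)) :
    absLe u v ↔ dd u + dd (u⁻¹ * v) = dd v := by
  unfold absLe reflLen
  rw [show wordLen {τ : Perm (Fin n) | τ.IsSwap} u = rl u from rfl,
    show wordLen {τ : Perm (Fin n) | τ.IsSwap} (u⁻¹ * v) = rl (u⁻¹ * v) from rfl,
    show wordLen {τ : Perm (Fin n) | τ.IsSwap} v = rl v from rfl,
    rl_eq_dd, rl_eq_dd, rl_eq_dd]


/-- `u` is below `v` in absolute order, in `dd` form. -/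
def ddLe (u v : Perm α) : Prop := dd u + dd (u⁻¹ * v) = dd v

lemma indic_eq_iff {s : Set α} [DecidablePred (· ∈ s)] {a b : α}
    (h : indic s a = indic s b) : a ∈ s ↔ b ∈ s := by
  by_cases ha : a ∈ s <;> by_cases hb : b ∈ s <;> simp_all [indic]

lemma ddLe.invariant {u v : Perm α} (h : ddLe u v) {s : Set α} [DecidablePred (· ∈ s)]
    (hs : ∀ z, v z ∈ s ↔ z ∈ s) : ∀ z, u z ∈ s ↔ z ∈ s := by
  have hmul : u * (u⁻¹ * v) = v := by group
  have hdd : dd u + dd (u⁻¹ * v) = dd (u * (u⁻¹ * v)) := by rw [hmul]; exact h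
  have hfix := fix_le_of_dd_add hdd
  rw [hmul] at hfix
  have hind : indic s ∈ fixSub u := (hfix (indic_mem_fixSub hs)).1
  intro z
  exact indic_eq_iff (hind z)

lemma ddLe.fix_of_fix {u v : Perm α} (h : ddLe u v) {x : α} (hx : v x = x) : u x = x := by
  classical
  have hs : ∀ z, v z ∈ ({x} : Set α) ↔ z ∈ ({x} : Set α) := by
    intro z
    simp only [Set.mem_singleton_iff]
    constructor
    · intro hz; exact v.injective (hz.trans hx.symm)
    · intro hz; rw [hz, hx]
  have := (h.invariant hs) x
  simpa using this.mpr rfl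

lemma swap_conj_eq (π : Perm α) (a b : α) :
    π⁻¹ * swap a b * π = swap (π⁻¹ a) (π⁻¹ b) := by
  have h := Equiv.swap_apply_apply π⁻¹ a b
  rw [h]
  simp [mul_assoc]

/-- Deletion lemma: removing a fixed point `x` of `π` from the cycle structure of `c`. -/
lemma ddLe_del {c π : Perm α} {x : α} (hc : c x ≠ x) (hπ : π x = x) :
    ddLe π c ↔ ddLe π (swap x (c x) * c) := by
  obtain ⟨y, hy⟩ : ∃ y, y = c x := ⟨c x, rfl⟩
  rw [← hy]
  have hyx : y ≠ x := by rw [hy]; exact hc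
  set c' := swap x y * c with hc'
  have hc'x : c' x = x := by simp [hc', hy, swap_apply_right]
  have hcc' : c = swap x y * c' := by
    rw [hc', ← mul_assoc, swap_mul_self, one_mul]
  have hddc : dd c = dd c' + 1 := by rw [hcc']; exact dd_swap_mul_fixed hc'x hyx
  have hπinv : π⁻¹ x = x := Equiv.Perm.inv_eq_iff_eq.mpr hπ.symm
  have hkey : π⁻¹ * c = swap x (π⁻¹ y) * (π⁻¹ * c') := by
    have h0 : π⁻¹ * c = (π⁻¹ * swap x y * π) * (π⁻¹ * c') := by
      rw [hcc']; group
    rw [h0, swap_conj_eq, hπinv]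
  have hfix2 : (π⁻¹ * c') x = x := by
    simp [Equiv.Perm.mul_apply, hc'x, hπinv]
  have hy2 : π⁻¹ y ≠ x := by
    intro h
    apply hyx
    have := congrArg π h
    rwa [show π (π⁻¹ y) = y from π.apply_symm_apply y, hπ] at this
  have hddπc : dd (π⁻¹ * c) = dd (π⁻¹ * c') + 1 := by
    rw [hkey]; exact dd_swap_mul_fixed hfix2 hy2
  unfold ddLe
  omega

/-- `σ` is supported inside `s`. -/
def IsSupp (σ : Perm α) (s : Set α) : Prop := ∀ x, x ∉ s → σ x = x

lemma IsSupp.mem {σ : Perm α} {s : Set α} (h : IsSupp σ s) {x : α} (hx : x ∈ s) : σ x ∈ s := by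
  by_contra hσx
  have h1 : σ (σ x) = σ x := h _ hσx
  have := σ.injective h1
  rw [this] at hσx
  exact hσx hx

lemma IsSupp.not_mem {σ : Perm α} {s : Set α} (h : IsSupp σ s) {x : α} (hx : x ∉ s) :
    σ x ∉ s := by rw [h x hx]; exact hx

lemma IsSupp.inv {σ : Perm α} {s : Set α} (h : IsSupp σ s) : IsSupp σ⁻¹ s := by
  intro x hx
  rw [← h x hx, show σ⁻¹ (σ x) = x from σ.symm_apply_apply x, h x hx]

lemma IsSupp.mul {σ τ : Perm α} {s : Set α} (hσ : IsSupp σ s) (hτ : IsSupp τ s) :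
    IsSupp (σ * τ) s := by
  intro x hx
  simp [Equiv.Perm.mul_apply, hτ x hx, hσ x hx]

lemma IsSupp.commute {A B : Perm α} {s : Set α} (hA : IsSupp A s) (hB : IsSupp B sᶜ) :
    A * B = B * A := by
  ext x
  simp only [Equiv.Perm.mul_apply]
  by_cases hx : x ∈ s
  · rw [hB x (by simpa using hx)]
    have : A x ∈ s := hA.mem hx
    rw [hB (A x) (by simpa using this)]
  · rw [hA x hx]
    have : B x ∈ sᶜ := hB.mem (by simpa using hx)
    rw [hA (B x) (by simpa using this)]

lemma fixSub_mul_disjoint {A B : Perm α} {s : Set α} (hA : IsSupp A s) (hB : IsSupp B sᶜ) :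
    fixSub (A * B) = fixSub A ⊓ fixSub B := by
  ext f
  constructor
  · intro h
    have hfB : ∀ x, f (B x) = f x := by
      intro x
      by_cases hx : x ∈ s
      · rw [hB x (by simpa using hx)]
      · have hBx : B x ∉ s := by
          have : B x ∈ sᶜ := hB.mem (by simpa using hx)
          simpa using this
        have := h x
        rwa [Equiv.Perm.mul_apply, hA (B x) hBx] at this
    constructor
    · intro x
      by_cases hx : x ∈ s
      · have := h x
        rwa [Equiv.Perm.mul_apply, hB x (by simpa using hx)] at this
      · rw [hA x hx]
    · exact hfB
  · rintro ⟨h1, h2⟩ x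
    rw [Equiv.Perm.mul_apply, h1 (B x), h2 x]

lemma fixSub_sup_disjoint {A B : Perm α} {s : Set α} [DecidablePred (· ∈ s)]
    (hA : IsSupp A s) (hB : IsSupp B sᶜ) :
    fixSub A ⊔ fixSub B = ⊤ := by
  rw [Submodule.eq_top_iff']
  intro f
  rw [Submodule.mem_sup]
  refine ⟨(fun z => if z ∈ s then 0 else f z), ?_, (fun z => if z ∈ s then f z else 0), ?_, ?_⟩
  · intro x
    by_cases hx : x ∈ s
    · have : A x ∈ s := hA.mem hx
      simp [hx, this]
    · rw [hA x hx]
  · intro x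
    by_cases hx : x ∈ s
    · rw [hB x (by simpa using hx)]
    · have : B x ∈ sᶜ := hB.mem (by simpa using hx)
      simp only [Set.mem_compl_iff] at this
      simp [hx, this]
  · funext z
    by_cases hz : z ∈ s <;> simp [hz]

lemma dd_mul_disjoint {A B : Perm α} {s : Set α} (hA : IsSupp A s) (hB : IsSupp B sᶜ) :
    dd (A * B) = dd A + dd B := by
  classical
  have hsup := Submodule.finrank_sup_add_finrank_inf_eq (fixSub A) (fixSub B)
  rw [fixSub_sup_disjoint hA hB, ← fixSub_mul_disjoint hA hB, finrank_top,
    Module.finrank_fintype_fun_eq_card] at hsup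
  have h1 := rr_le_card A
  have h2 := rr_le_card B
  have h3 := rr_le_card (A * B)
  simp only [rr] at *
  simp only [dd, rr]
  omega


section Restr

variable (s : Set α) [DecidablePred (· ∈ s)]

/-- restriction of a permutation to an invariant set, identity elsewhere -/
def restr (π : Perm α) (h : ∀ z, π z ∈ s ↔ z ∈ s) : Perm α :=
  Equiv.Perm.ofSubtype (π.subtypePerm h)

lemma restr_apply_mem (π : Perm α) (h : ∀ z, π z ∈ s ↔ z ∈ s) {x : α} (hx : x ∈ s) :
    restr s π h x = π x :=
  Equiv.Perm.ofSubtype_apply_of_mem _ hx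

lemma restr_apply_not_mem (π : Perm α) (h : ∀ z, π z ∈ s ↔ z ∈ s) {x : α} (hx : x ∉ s) :
    restr s π h x = x :=
  Equiv.Perm.ofSubtype_apply_of_not_mem _ hx

lemma restr_isSupp (π : Perm α) (h : ∀ z, π z ∈ s ↔ z ∈ s) : IsSupp (restr s π h) s :=
  fun _ hx => restr_apply_not_mem s π h hx

end Restr

lemma ddLe_prod_iff {v₁ v₂ : Perm α} {s : Set α} (h₁ : IsSupp v₁ s) (h₂ : IsSupp v₂ sᶜ)
    {π₁ π₂ : Perm α} (g₁ : IsSupp π₁ s) (g₂ : IsSupp π₂ sᶜ) :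
    ddLe (π₁ * π₂) (v₁ * v₂) ↔ ddLe π₁ v₁ ∧ ddLe π₂ v₂ := by
  have hs1 : IsSupp (π₁⁻¹ * v₁) s := g₁.inv.mul h₁
  have hs2 : IsSupp (π₂⁻¹ * v₂) sᶜ := g₂.inv.mul h₂
  have key : (π₁ * π₂)⁻¹ * (v₁ * v₂) = (π₁⁻¹ * v₁) * (π₂⁻¹ * v₂) := by
    have hcomm : (π₁⁻¹ * v₁) * π₂⁻¹ = π₂⁻¹ * (π₁⁻¹ * v₁) := hs1.commute g₂.inv
    calc (π₁ * π₂)⁻¹ * (v₁ * v₂) = (π₂⁻¹ * (π₁⁻¹ * v₁)) * v₂ := by group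
    _ = ((π₁⁻¹ * v₁) * π₂⁻¹) * v₂ := by rw [hcomm]
    _ = (π₁⁻¹ * v₁) * (π₂⁻¹ * v₂) := by group
  have e1 : dd (π₁ * π₂) = dd π₁ + dd π₂ := dd_mul_disjoint g₁ g₂
  have e2 : dd ((π₁ * π₂)⁻¹ * (v₁ * v₂)) = dd (π₁⁻¹ * v₁) + dd (π₂⁻¹ * v₂) := by
    rw [key]; exact dd_mul_disjoint hs1 hs2
  have e3 : dd (v₁ * v₂) = dd v₁ + dd v₂ := dd_mul_disjoint h₁ h₂
  have i1 : dd v₁ ≤ dd π₁ + dd (π₁⁻¹ * v₁) := by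
    have := dd_mul_le π₁ (π₁⁻¹ * v₁)
    have h : π₁ * (π₁⁻¹ * v₁) = v₁ := by group
    rwa [h] at this
  have i2 : dd v₂ ≤ dd π₂ + dd (π₂⁻¹ * v₂) := by
    have := dd_mul_le π₂ (π₂⁻¹ * v₂)
    have h : π₂ * (π₂⁻¹ * v₂) = v₂ := by group
    rwa [h] at this
  unfold ddLe
  omega

lemma prod_invariant {v₁ v₂ : Perm α} {s : Set α} (h₁ : IsSupp v₁ s) (h₂ : IsSupp v₂ sᶜ) :
    ∀ z, (v₁ * v₂) z ∈ s ↔ z ∈ s := by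
  intro z
  by_cases hz : z ∈ s
  · simp only [Equiv.Perm.mul_apply, h₂ z (by simpa using hz)]
    exact ⟨fun _ => hz, fun _ => h₁.mem hz⟩
  · have hv2 : v₂ z ∈ sᶜ := h₂.mem (by simpa using hz)
    simp only [Equiv.Perm.mul_apply, h₁ (v₂ z) (by simpa using hv2)]
    constructor
    · intro h; exact absurd h (by simpa using hv2)
    · intro h; exact absurd h hz

/-- Splitting of the interval below a product of disjointly supported permutations. -/
noncomputable def prodSplit {v₁ v₂ : Perm α} {s : Set α} [DecidablePred (· ∈ s)]
    (h₁ : IsSupp v₁ s) (h₂ : IsSupp v₂ sᶜ) :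
    {π : Perm α // ddLe π (v₁ * v₂)} ≃ {π₁ : Perm α // ddLe π₁ v₁} × {π₂ : Perm α // ddLe π₂ v₂} := by
  have hvinv := prod_invariant h₁ h₂
  have hdec : ∀ (π : Perm α) (hπ : ddLe π (v₁ * v₂)),
      restr s π (hπ.invariant hvinv) * restr sᶜ π (fun z => by
        simp only [Set.mem_compl_iff, not_iff_not]; exact hπ.invariant hvinv z) = π := by
    intro π hπ
    ext x
    by_cases hx : x ∈ s
    · rw [Equiv.Perm.mul_apply, restr_apply_not_mem sᶜ π _ (by simpa using hx),
        restr_apply_mem s π _ hx]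
    · rw [Equiv.Perm.mul_apply, restr_apply_mem sᶜ π _ (by simpa using hx),
        restr_apply_not_mem s π _ ((hπ.invariant hvinv (x)).not.mpr hx |> fun h => by
          simpa using ((hπ.invariant hvinv x).not.mpr hx))]
  refine
  { toFun := fun p => ?_
    invFun := fun q => ⟨q.1.1 * q.2.1, ?_⟩
    left_inv := ?_
    right_inv := ?_ }
  · obtain ⟨π, hπ⟩ := p
    have g₁ := restr_isSupp s π (hπ.invariant hvinv)
    have g₂ := restr_isSupp sᶜ π (fun z => by
        simp only [Set.mem_compl_iff, not_iff_not]; exact hπ.invariant hvinv z)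
    have := (ddLe_prod_iff h₁ h₂ g₁ g₂).mp (by rw [hdec π hπ]; exact hπ)
    exact (⟨_, this.1⟩, ⟨_, this.2⟩)
  · obtain ⟨⟨π₁, hp1⟩, ⟨π₂, hp2⟩⟩ := q
    have g₁ : IsSupp π₁ s := fun x hx => hp1.fix_of_fix (h₁ x hx)
    have g₂ : IsSupp π₂ sᶜ := fun x hx => hp2.fix_of_fix (h₂ x hx)
    exact (ddLe_prod_iff h₁ h₂ g₁ g₂).mpr ⟨hp1, hp2⟩
  · rintro ⟨π, hπ⟩
    exact Subtype.ext (hdec π hπ)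
  · rintro ⟨⟨π₁, hp1⟩, ⟨π₂, hp2⟩⟩
    have g₁ : IsSupp π₁ s := fun x hx => hp1.fix_of_fix (h₁ x hx)
    have g₂ : IsSupp π₂ sᶜ := fun x hx => hp2.fix_of_fix (h₂ x hx)
    have hπ := (ddLe_prod_iff h₁ h₂ g₁ g₂).mpr ⟨hp1, hp2⟩
    refine Prod.ext (Subtype.ext ?_) (Subtype.ext ?_)
    · ext x
      by_cases hx : x ∈ s
      · rw [restr_apply_mem s _ _ hx, Equiv.Perm.mul_apply, g₂ x (by simpa using hx)]
      · rw [restr_apply_not_mem s _ _ hx, g₁ x hx]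
    · ext x
      by_cases hx : x ∈ sᶜ
      · rw [restr_apply_mem sᶜ _ _ hx, Equiv.Perm.mul_apply]
        have : π₂ x ∈ sᶜ := g₂.mem hx
        rw [g₁ (π₂ x) (by simpa using this)]
      · rw [restr_apply_not_mem sᶜ _ _ hx, g₂ x hx]


section Transfer

variable {β : Type*} [Fintype β] [DecidableEq β] (e : α ↪ β)

lemma viaEmbedding_swap (a b : α) :
    (swap a b).viaEmbedding e = swap (e a) (e b) := by
  ext z
  by_cases hz : z ∈ Set.range e
  · obtain ⟨x, rfl⟩ := hz
    rw [Equiv.Perm.viaEmbedding_apply]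
    rcases eq_or_ne x a with rfl | hxa
    · simp [swap_apply_left]
    rcases eq_or_ne x b with rfl | hxb
    · simp [swap_apply_right]
    · rw [swap_apply_of_ne_of_ne hxa hxb,
        swap_apply_of_ne_of_ne (fun h => hxa (e.injective h)) (fun h => hxb (e.injective h))]
  · rw [Equiv.Perm.viaEmbedding_apply_of_notMem _ _ _ hz,
      swap_apply_of_ne_of_ne (fun h => hz ⟨a, h.symm⟩ ) (fun h => hz ⟨b, h.symm⟩)]
    
lemma rl_viaEmbedding_le (ρ : Perm α) : rl (ρ.viaEmbedding e) ≤ rl ρ := by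
  obtain ⟨l, hswap, hlen, hprod⟩ := Nat.sInf_mem (wordSet_nonempty ρ)
  rw [rl_def]
  apply Nat.sInf_le
  refine ⟨l.map (Equiv.Perm.viaEmbeddingHom e), ?_, by simpa [rl_def] using hlen, ?_⟩
  · intro τ hτ
    obtain ⟨σ, hσl, rfl⟩ := List.mem_map.mp hτ
    obtain ⟨a, b, hab, rfl⟩ := hswap σ hσl
    rw [Equiv.Perm.viaEmbeddingHom_apply, viaEmbedding_swap]
    exact ⟨e a, e b, fun h => hab (e.injective h), rfl⟩
  · rw [List.prod_hom l (Equiv.Perm.viaEmbeddingHom e), hprod,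
      Equiv.Perm.viaEmbeddingHom_apply]

lemma rr_viaEmbedding_le (ρ : Perm α) :
    rr (ρ.viaEmbedding e) ≤ rr ρ + (Fintype.card β - Fintype.card α) := by
  classical
  set Φ : ↥(fixSub (ρ.viaEmbedding e)) →ₗ[ℚ] ↥(fixSub ρ) × (↥((Set.range e)ᶜ) → ℚ) :=
    { toFun := fun f => (⟨fun x => f.1 (e x), fun x => by
        have := f.2 (e x)
        rwa [show (ρ.viaEmbedding e) (e x) = e (ρ x) from Equiv.Perm.viaEmbedding_apply ρ e x]
          at this⟩,
        fun y => f.1 y.1)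
      map_add' := fun f g => rfl
      map_smul' := fun c f => rfl } with hΦ
  have hinj : Function.Injective Φ := by
    intro f g hfg
    have h1 := congrArg Prod.fst hfg
    have h2 := congrArg Prod.snd hfg
    apply Subtype.ext
    funext z
    by_cases hz : z ∈ Set.range e
    · obtain ⟨x, rfl⟩ := hz
      exact congrFun (congrArg Subtype.val h1) x
    · exact congrFun h2 ⟨z, hz⟩
  have hle := LinearMap.finrank_le_finrank_of_injective hinj
  have hcompl : Fintype.card ↥((Set.range e)ᶜ) = Fintype.card β - Fintype.card α := by
    rw [Fintype.card_compl_set]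
    congr 1
    rw [Set.card_range_of_injective e.injective]
  rw [Module.finrank_prod, Module.finrank_fintype_fun_eq_card, hcompl] at hle
  exact hle

lemma dd_viaEmbedding (ρ : Perm α) : dd (ρ.viaEmbedding e) = dd ρ := by
  have h1 : dd (ρ.viaEmbedding e) ≤ dd ρ := by
    rw [← rl_eq_dd, ← rl_eq_dd]; exact rl_viaEmbedding_le e ρ
  have h2 := rr_viaEmbedding_le e ρ
  have h3 := rr_le_card ρ
  have h4 := rr_le_card (ρ.viaEmbedding e)
  have h5 : Fintype.card α ≤ Fintype.card β := Fintype.card_le_of_embedding e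
  simp only [dd] at *
  omega

lemma viaEmbedding_invariant (v : Perm α) :
    ∀ z, (v.viaEmbedding e) z ∈ Set.range e ↔ z ∈ Set.range e := by
  intro z
  by_cases hz : z ∈ Set.range e
  · obtain ⟨x, rfl⟩ := hz
    rw [Equiv.Perm.viaEmbedding_apply]
    exact ⟨fun _ => ⟨x, rfl⟩, fun _ => ⟨v x, rfl⟩⟩
  · rw [Equiv.Perm.viaEmbedding_apply_of_notMem _ _ _ hz]

lemma ddLe_viaEmbedding_iff (ρ v : Perm α) :
    ddLe (ρ.viaEmbedding e) (v.viaEmbedding e) ↔ ddLe ρ v := by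
  unfold ddLe
  have hmul : (ρ.viaEmbedding e)⁻¹ * (v.viaEmbedding e) = (ρ⁻¹ * v).viaEmbedding e := by
    rw [← Equiv.Perm.viaEmbeddingHom_apply, ← Equiv.Perm.viaEmbeddingHom_apply,
      ← Equiv.Perm.viaEmbeddingHom_apply, ← map_inv, ← map_mul]
  rw [hmul, dd_viaEmbedding, dd_viaEmbedding, dd_viaEmbedding]

/-- pull back a permutation preserving the range of an embedding -/
noncomputable def pull (π : Perm β) (h : ∀ z, π z ∈ Set.range e ↔ z ∈ Set.range e) : Perm α :=
  (Equiv.ofInjective e e.injective).symm.permCongr (π.subtypePerm h)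

lemma pull_spec (π : Perm β) (h : ∀ z, π z ∈ Set.range e ↔ z ∈ Set.range e) (x : α) :
    e (pull e π h x) = π (e x) := by
  have h1 : pull e π h x = (Equiv.ofInjective e e.injective).symm
      ⟨π (e x), (h (e x)).mpr ⟨x, rfl⟩⟩ := rfl
  rw [h1]
  exact Equiv.apply_ofInjective_symm e.injective _

lemma via_pull (π : Perm β) (h : ∀ z, π z ∈ Set.range e ↔ z ∈ Set.range e)
    (hfix : ∀ z, z ∉ Set.range e → π z = z) :
    (pull e π h).viaEmbedding e = π := by
  ext z
  by_cases hz : z ∈ Set.range e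
  · obtain ⟨x, rfl⟩ := hz
    rw [Equiv.Perm.viaEmbedding_apply]
    exact pull_spec e π h x
  · rw [Equiv.Perm.viaEmbedding_apply_of_notMem _ _ _ hz, hfix z hz]

/-- Transfer: the interval below an embedded permutation is equivalent to the one below
the original. -/
noncomputable def transferEquiv (v : Perm α) :
    {π : Perm β // ddLe π (v.viaEmbedding e)} ≃ {ρ : Perm α // ddLe ρ v} := by
  classical
  have hrange : ∀ (π : Perm β), ddLe π (v.viaEmbedding e) →
      ∀ z, π z ∈ Set.range e ↔ z ∈ Set.range e := fun π hπ =>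
    hπ.invariant (viaEmbedding_invariant e v)
  have hfix : ∀ (π : Perm β), ddLe π (v.viaEmbedding e) →
      ∀ z, z ∉ Set.range e → π z = z := fun π hπ z hz =>
    hπ.fix_of_fix (Equiv.Perm.viaEmbedding_apply_of_notMem _ _ _ hz)
  refine
  { toFun := fun p => ⟨pull e p.1 (hrange p.1 p.2), ?_⟩
    invFun := fun q => ⟨q.1.viaEmbedding e, (ddLe_viaEmbedding_iff e q.1 v).mpr q.2⟩
    left_inv := ?_
    right_inv := ?_ }
  · have := p.2
    rw [← via_pull e p.1 (hrange p.1 p.2) (hfix p.1 p.2)] at this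
    exact (ddLe_viaEmbedding_iff e _ v).mp this
  · rintro ⟨π, hπ⟩
    exact Subtype.ext (via_pull e π (hrange π hπ) (hfix π hπ))
  · rintro ⟨ρ, hρ⟩
    apply Subtype.ext
    apply Equiv.ext
    intro x
    apply e.injective
    rw [pull_spec, Equiv.Perm.viaEmbedding_apply]


end Transfer


section FinStuff

lemma fixSub_finRotate (m : ℕ) :
    fixSub (finRotate (m+1)) = Submodule.span ℚ {(fun _ => 1 : Fin (m+1) → ℚ)} := by
  ext f
  constructor
  · intro hf
    have hconst : ∀ v : ℕ, ∀ hv : v < m + 1, f ⟨v, hv⟩ = f 0 := by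
      intro v
      induction v with
      | zero => intro hv; rfl
      | succ v ih =>
        intro hv
        have hv' : v < m + 1 := by omega
        have hstep := hf ⟨v, hv'⟩
        rw [finRotate_succ_apply] at hstep
        have heq : (⟨v, hv'⟩ : Fin (m+1)) + 1 = ⟨v+1, hv⟩ := by
          apply Fin.ext
          rw [Fin.val_add_one]
          have hne : (⟨v, hv'⟩ : Fin (m+1)) ≠ Fin.last m := by
            intro h
            have := congrArg Fin.val h
            simp only [Fin.last] at this
            omega
          simp [hne]
        rw [heq] at hstep
        rw [hstep, ih hv']
    have hf0 : f = (f 0) • (fun _ => (1:ℚ)) := by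
      funext i
      have := hconst i.val i.isLt
      simp only [Fin.eta] at this
      simp [this]
    rw [hf0]
    exact Submodule.smul_mem _ _ (Submodule.mem_span_singleton_self _)
  · intro hf
    obtain ⟨c, rfl⟩ := Submodule.mem_span_singleton.mp hf
    intro x
    simp

lemma dd_finRotate (m : ℕ) : dd (finRotate (m+1)) = m := by
  have h1 : rr (finRotate (m+1)) = 1 := by
    rw [rr, fixSub_finRotate]
    apply finrank_span_singleton
    intro h
    have := congrFun h 0
    simp at this
  simp [dd, h1]

lemma viaE_one {β : Type*} [Fintype β] [DecidableEq β] (e : α ↪ β) :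
    (1 : Perm α).viaEmbedding e = 1 := by
  rw [← Equiv.Perm.viaEmbeddingHom_apply, map_one]

/-- The interval count. -/
noncomputable def NN (m : ℕ) : ℕ := Nat.card {π : Perm (Fin m) // ddLe π (finRotate m)}

lemma ddLe_refl_one {m : ℕ} [Subsingleton (Perm (Fin m))] (v : Perm (Fin m)) : ddLe (1 : Perm (Fin m)) v := by
  unfold ddLe
  have : v = 1 := Subsingleton.elim _ _
  simp [this, dd_one]

lemma NN_zero : NN 0 = 1 := by
  have : Nonempty {π : Perm (Fin 0) // ddLe π (finRotate 0)} := ⟨⟨1, ddLe_refl_one _⟩⟩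
  exact Nat.card_unique

lemma NN_one : NN 1 = 1 := by
  have : Nonempty {π : Perm (Fin 1) // ddLe π (finRotate 1)} := ⟨⟨1, ddLe_refl_one _⟩⟩
  exact Nat.card_unique

/-- generic fibering equivalence -/
def fiberEquiv {A J : Type*} (P : A → Prop) (f : A → J) :
    {a : A // P a} ≃ Σ j : J, {a : A // P a ∧ f a = j} where
  toFun a := ⟨f a.1, a.1, a.2, rfl⟩
  invFun x := ⟨x.2.1, x.2.2.1⟩
  left_inv a := rfl
  right_inv := by rintro ⟨j, a, h1, rfl⟩; rfl

lemma nat_card_sigma {J : Type*} [Fintype J] (g : J → Type*) [∀ j, Finite (g j)] :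
    Nat.card ((j : J) × g j) = ∑ j, Nat.card (g j) := by
  classical
  letI : ∀ j, Fintype (g j) := fun j => Fintype.ofFinite _
  rw [Nat.card_eq_fintype_card, Fintype.card_sigma]
  exact Finset.sum_congr rfl (fun j _ => (Nat.card_eq_fintype_card).symm)

/-- identity equivalence when the extra fixed-point condition is automatic -/
lemma swap_mul_apply_self (C : Perm α) (x : α) : (swap x (C x) * C) x = x := by
  rw [Equiv.Perm.mul_apply, swap_apply_right]

def delEquiv {C : Perm α} {x : α} (hC : C x ≠ x) :
    {π : Perm α // ddLe π C ∧ π x = x} ≃ {π : Perm α // ddLe π (swap x (C x) * C)} where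
  toFun p := ⟨p.1, (ddLe_del hC p.2.2).mp p.2.1⟩
  invFun p := ⟨p.1, (ddLe_del hC (p.2.fix_of_fix (swap_mul_apply_self C x))).mpr p.2,
    p.2.fix_of_fix (swap_mul_apply_self C x)⟩
  left_inv p := rfl
  right_inv p := rfl

def swapEquiv {C : Perm α} {x y : α} (hxy : y ≠ x)
    (hd : dd C = dd (swap y x * C) + 1) :
    {π : Perm α // ddLe π C ∧ π x = y} ≃ {ρ : Perm α // ddLe ρ (swap y x * C) ∧ ρ x = x} := by
  have hiff : ∀ π : Perm α, π x = y →
      (ddLe π C ↔ ddLe (swap y x * π) (swap y x * C)) := by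
    intro π hπ
    have hfix : (swap y x * π) x = x := by
      rw [Equiv.Perm.mul_apply, hπ, swap_apply_left]
    have hdd : dd π = dd (swap y x * π) + 1 := by
      have hππ : π = swap x y * (swap y x * π) := by
        rw [swap_comm x y, ← mul_assoc, swap_mul_self, one_mul]
      conv_lhs => rw [hππ]
      exact dd_swap_mul_fixed hfix hxy
    have hinv : (swap y x * π)⁻¹ * (swap y x * C) = π⁻¹ * C := by group
    unfold ddLe
    rw [hinv]
    omega
  refine
  { toFun := fun p => ⟨swap y x * p.1, (hiff p.1 p.2.2).mp p.2.1, by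
      rw [Equiv.Perm.mul_apply, p.2.2, swap_apply_left]⟩
    invFun := fun q => ⟨swap y x * q.1, ?_, ?_⟩
    left_inv := ?_
    right_inv := ?_ }
  · have hπx : (swap y x * q.1) x = y := by
      rw [Equiv.Perm.mul_apply, q.2.2, swap_apply_right]
    have heq : swap y x * (swap y x * q.1) = q.1 := by
      rw [← mul_assoc, swap_mul_self, one_mul]
    have := (hiff _ hπx)
    rw [heq] at this
    exact this.mpr q.2.1
  · rw [Equiv.Perm.mul_apply, q.2.2, swap_apply_right]
  · rintro ⟨π, h⟩
    apply Subtype.ext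
    simp only
    rw [← mul_assoc, swap_mul_self, one_mul]
  · rintro ⟨ρ, h⟩
    apply Subtype.ext
    simp only
    rw [← mul_assoc, swap_mul_self, one_mul]


lemma finRotate_val {m : ℕ} (i : Fin (m+1)) :
    ((finRotate (m+1)) i).val = if i.val = m then 0 else i.val + 1 := by
  rw [finRotate_succ_apply, Fin.val_add_one]
  by_cases h : i = Fin.last m
  · have : i.val = m := by rw [h]; rfl
    simp [h, this]
  · have : i.val ≠ m := fun hv => h (Fin.ext (by simpa using hv))
    simp [h, this]

lemma val_add_one' {N : ℕ} (z : Fin (N+1)) :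
    (z + 1).val = if z.val = N then 0 else z.val + 1 := by
  rw [Fin.val_add_one]
  by_cases h : z = Fin.last N
  · have : z.val = N := by rw [h]; rfl
    simp [h, this]
  · have : z.val ≠ N := fun hv => h (Fin.ext (by simpa using hv))
    simp [h, this]

lemma swap_val {N : ℕ} (a b z : Fin N) :
    ((swap a b) z).val = if z.val = a.val then b.val else if z.val = b.val then a.val
      else z.val := by
  by_cases h1 : z = a
  · subst h1
    rw [swap_apply_left]
    simp
  by_cases h2 : z = b
  · subst h2
    rw [swap_apply_right]
    have : z.val ≠ a.val := fun h => h1 (Fin.ext h)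
    simp [this]
  · rw [swap_apply_of_ne_of_ne h1 h2]
    have ha : z.val ≠ a.val := fun h => h1 (Fin.ext h)
    have hb : z.val ≠ b.val := fun h => h2 (Fin.ext h)
    simp [ha, hb]

/-- embedding of an interval `[k, k+sz)` into `Fin (N+1)` -/
def embS (N k sz : ℕ) (h : k + sz ≤ N) : Fin sz ↪ Fin (N+1) :=
  ⟨fun i => ⟨k + i.val, by omega⟩, fun a b hab => Fin.ext (by
    have := congrArg Fin.val hab
    simp only at this
    omega)⟩

@[simp] lemma embS_val (N k sz : ℕ) (h : k + sz ≤ N) (i : Fin sz) :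
    (embS N k sz h i).val = k + i.val := rfl

lemma viaE_apply_eq {γ δ : Type*} (ρ : Perm γ) (e : γ ↪ δ) {z : δ} {x : γ} (h : e x = z) :
    ρ.viaEmbedding e z = e (ρ x) := by
  subst h
  exact Equiv.Perm.viaEmbedding_apply ρ e x

lemma viaE_apply_ne {γ δ : Type*} (ρ : Perm γ) (e : γ ↪ δ) {z : δ} (h : ∀ x, e x ≠ z) :
    ρ.viaEmbedding e z = z :=
  Equiv.Perm.viaEmbedding_apply_of_notMem ρ e z (by rintro ⟨x, hx⟩; exact h x hx)

lemma viaE_embS_val (N k m : ℕ) (h : k + (m+1) ≤ N) (z : Fin (N+1)) :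
    (((finRotate (m+1)).viaEmbedding (embS N k (m+1) h)) z).val =
      if z.val < k then z.val
      else if z.val = k + m then k
      else if k + m < z.val then z.val
      else z.val + 1 := by
  by_cases h1 : z.val < k
  · rw [viaE_apply_ne _ _ (fun x hx => by
      have := congrArg Fin.val hx
      simp only [embS_val] at this
      omega)]
    split_ifs <;> omega
  by_cases h2 : k + m < z.val
  · rw [viaE_apply_ne _ _ (fun x hx => by
      have := congrArg Fin.val hx
      have hxlt := x.isLt
      simp only [embS_val] at this
      omega)]
    split_ifs <;> omega
  · have hze : embS N k (m+1) h ⟨z.val - k, by omega⟩ = z := Fin.ext (by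
      simp only [embS_val]
      omega)
    rw [viaE_apply_eq _ _ hze]
    have hfr := finRotate_val (⟨z.val - k, by omega⟩ : Fin (m+1))
    simp only [embS_val, hfr]
    split_ifs <;> omega

lemma finRotate_last {n : ℕ} : finRotate (n+1) (Fin.last n) = 0 := by
  rw [finRotate_succ_apply, Fin.last_add_one]

lemma identity6 (m : ℕ) :
    swap (0 : Fin (m+2)) (Fin.last (m+1)) * finRotate (m+2)
      = (finRotate (m+1)).viaEmbedding (embS (m+1) 0 (m+1) (by omega)) := by
  ext z
  rw [Equiv.Perm.mul_apply, swap_val, finRotate_val, viaE_embS_val]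
  have hz := z.isLt
  simp only [Fin.val_zero, Fin.val_last]
  split_ifs <;> (try cases ‹False›) <;> omega

set_option maxHeartbeats 2000000 in
lemma identity4 (a b : ℕ) :
    swap (Fin.last (a+b+2)) 0
        * (swap (⟨a+1, by omega⟩ : Fin (a+b+2+1)) (Fin.last (a+b+2)) * finRotate (a+b+2+1))
      = (finRotate (a+1)).viaEmbedding (embS (a+b+2) 0 (a+1) (by omega))
        * (finRotate (b+1)).viaEmbedding (embS (a+b+2) (a+1) (b+1) (by omega)) := by
  ext z
  rw [Equiv.Perm.mul_apply, Equiv.Perm.mul_apply, Equiv.Perm.mul_apply,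
    swap_val, swap_val, finRotate_val, viaE_embS_val, viaE_embS_val]
  have hz := z.isLt
  simp only [Fin.val_zero, Fin.val_last]
  split_ifs <;> (try cases ‹False›) <;> omega

end FinStuff


section Main

lemma viaE_isSupp {γ : Type*} (ρ : Perm γ) (e : γ ↪ α) :
    IsSupp (ρ.viaEmbedding e) (Set.range e) := fun x hx =>
  Equiv.Perm.viaEmbedding_apply_of_notMem ρ e x hx

lemma card_viaE_embS (N k sz : ℕ) (h : k + sz ≤ N) :
    Nat.card {π : Perm (Fin (N+1)) // ddLe π ((finRotate sz).viaEmbedding (embS N k sz h))}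
      = NN sz :=
  Nat.card_congr (transferEquiv (embS N k sz h) (finRotate sz))

set_option maxHeartbeats 3000000 in
lemma fiber_count (n : ℕ) (hn : 1 ≤ n) (j : Fin (n+1)) :
    Nat.card {π : Perm (Fin (n+1)) // ddLe π (finRotate (n+1)) ∧ π (Fin.last n) = j}
      = NN j.val * NN (n - j.val) := by
  classical
  by_cases hj : j = Fin.last n
  · -- top fiber : j = last
    subst hj
    obtain ⟨m, rfl⟩ : ∃ m, n = m + 1 := ⟨n - 1, by omega⟩
    have hC : finRotate (m+2) (Fin.last (m+1)) ≠ Fin.last (m+1) := by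
      rw [finRotate_last]
      intro h
      have := congrArg Fin.val h
      simp [Fin.val_last] at this
    have e1 := delEquiv hC
    have hrw : ∀ π : Perm (Fin (m+2)),
        ddLe π (swap (Fin.last (m+1)) (finRotate (m+2) (Fin.last (m+1))) * finRotate (m+2)) ↔
        ddLe π ((finRotate (m+1)).viaEmbedding (embS (m+1) 0 (m+1) (by omega))) := by
      intro π
      rw [finRotate_last, swap_comm, identity6 m]
    have e2 := Equiv.subtypeEquivRight hrw
    have := Nat.card_congr ((e1.trans e2).trans
      (transferEquiv (embS (m+1) 0 (m+1) (by omega)) (finRotate (m+1))))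
    rw [this]
    rw [Fin.val_last, Nat.sub_self, NN_zero, mul_one]
    rfl
  · have hjlt : j.val < n := by
      have h1 := j.isLt
      have h2 : j.val ≠ n := fun h => hj (Fin.ext (by simp [h, Fin.val_last]))
      omega
    by_cases hk0 : j.val = 0
    · -- j = 0
      obtain ⟨m, rfl⟩ : ∃ m, n = m + 1 := ⟨n - 1, by omega⟩
      have hj0 : j = 0 := Fin.ext (by simp [hk0])
      subst hj0
      have hy : (0 : Fin (m+2)) ≠ Fin.last (m+1) := by
        intro h
        have := congrArg Fin.val h
        simp [Fin.val_last] at this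
      have hid := identity6 m
      have hd : dd (finRotate (m+2))
          = dd (swap (0 : Fin (m+2)) (Fin.last (m+1)) * finRotate (m+2)) + 1 := by
        rw [hid, dd_viaEmbedding, dd_finRotate, dd_finRotate]
      have e1 := swapEquiv hy hd
      have hfixL : ∀ ρ : Perm (Fin (m+2)),
          ddLe ρ (swap (0 : Fin (m+2)) (Fin.last (m+1)) * finRotate (m+2)) →
          ρ (Fin.last (m+1)) = Fin.last (m+1) := by
        intro ρ hρ
        apply hρ.fix_of_fix
        rw [hid]
        apply viaE_apply_ne
        intro x hx
        have := congrArg Fin.val hx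
        have hxlt := x.isLt
        simp [Fin.val_last] at this
        omega
      have e2 : {ρ : Perm (Fin (m+2)) //
          ddLe ρ (swap (0 : Fin (m+2)) (Fin.last (m+1)) * finRotate (m+2)) ∧
            ρ (Fin.last (m+1)) = Fin.last (m+1)}
          ≃ {ρ : Perm (Fin (m+2)) //
          ddLe ρ (swap (0 : Fin (m+2)) (Fin.last (m+1)) * finRotate (m+2))} :=
        Equiv.subtypeEquivRight (fun ρ => ⟨fun h => h.1, fun h => ⟨h, hfixL ρ h⟩⟩)
      have e3 := Equiv.subtypeEquivRight (fun π : Perm (Fin (m+2)) =>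
        iff_of_eq (congrArg (ddLe π) hid))
      have := Nat.card_congr (((e1.trans e2).trans e3).trans
        (transferEquiv (embS (m+1) 0 (m+1) (by omega)) (finRotate (m+1))))
      rw [this]
      simp only [Fin.val_zero, Nat.sub_zero, NN_zero, one_mul]
      rfl
    · -- middle fibers : 1 ≤ j.val < n
      obtain ⟨a, ha⟩ : ∃ a, j.val = a + 1 := ⟨j.val - 1, by omega⟩
      obtain ⟨b, hb⟩ : ∃ b, n = a + b + 2 := ⟨n - a - 2, by omega⟩
      subst hb
      have hjmk : j = ⟨a+1, by omega⟩ := Fin.ext (by simp [ha])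
      rw [hjmk]
      set L : Fin (a+b+2+1) := Fin.last (a+b+2) with hL
      set c : Perm (Fin (a+b+2+1)) := finRotate (a+b+2+1) with hc
      set jf : Fin (a+b+2+1) := ⟨a+1, by omega⟩ with hjf
      have hid := identity4 a b
      set A' : Perm (Fin (a+b+2+1)) :=
        (finRotate (a+1)).viaEmbedding (embS (a+b+2) 0 (a+1) (by omega)) with hA'
      set B : Perm (Fin (a+b+2+1)) :=
        (finRotate (b+1)).viaEmbedding (embS (a+b+2) (a+1) (b+1) (by omega)) with hB
      set s : Set (Fin (a+b+2+1)) := Set.range (embS (a+b+2) 0 (a+1) (by omega)) with hs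
      have hsuppA : IsSupp A' s := viaE_isSupp _ _
      have hsuppB : IsSupp B sᶜ := by
        intro x hx
        have hxs : x ∈ s := by simpa using hx
        obtain ⟨i, hi⟩ := hxs
        have hxval : x.val < a + 1 := by
          rw [← hi]
          have := i.isLt
          simp only [embS_val]
          omega
        apply viaE_apply_ne
        intro y hy
        have := congrArg Fin.val hy
        simp only [embS_val] at this
        omega
      -- the products fix L
      have hBL : B L = L := by
        apply viaE_apply_ne
        intro y hy
        have := congrArg Fin.val hy
        have hylt := y.isLt
        simp only [embS_val, hL, Fin.val_last] at this
        omega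
      have hAL : A' L = L := by
        apply viaE_apply_ne
        intro y hy
        have := congrArg Fin.val hy
        have hylt := y.isLt
        simp only [embS_val, hL, Fin.val_last] at this
        omega
      have hABL : (A' * B) L = L := by
        rw [Equiv.Perm.mul_apply, hBL, hAL]
      have h0L : (0 : Fin (a+b+2+1)) ≠ L := by
        intro h
        have := congrArg Fin.val h
        simp [hL, Fin.val_last] at this
      have hswapLc : swap jf L * c = swap L 0 * (A' * B) := by
        rw [← hid, ← mul_assoc, swap_mul_self, one_mul]
      have hd2 : dd (swap jf L * c) = dd (A' * B) + 1 := by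
        rw [hswapLc]
        exact dd_swap_mul_fixed hABL h0L
      have hddAB : dd (A' * B) = dd A' + dd B := dd_mul_disjoint hsuppA hsuppB
      have hddA : dd A' = a := by rw [hA', dd_viaEmbedding, dd_finRotate]
      have hddB : dd B = b := by rw [hB, dd_viaEmbedding, dd_finRotate]
      have hd : dd c = dd (swap jf L * c) + 1 := by
        have hddc : dd c = a + b + 2 := by rw [hc]; exact dd_finRotate (a+b+2)
        omega
      have hjfL : jf ≠ L := by
        intro h
        have h2 := congrArg Fin.val h
        have h3 : (jf : Fin (a+b+2+1)).val = a + 1 := rfl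
        have h4 : (L : Fin (a+b+2+1)).val = a + b + 2 := rfl
        rw [h3, h4] at h2
        omega
      have e1 := swapEquiv hjfL hd
      have hCL : (swap jf L * c) L = 0 := by
        have hcL : c L = 0 := finRotate_last
        rw [Equiv.Perm.mul_apply, hcL]
        exact swap_apply_of_ne_of_ne (by
          intro h
          have h2 := congrArg Fin.val h
          have h3 : ((0 : Fin (a+b+2+1))).val = 0 := rfl
          have h4 : (jf : Fin (a+b+2+1)).val = a + 1 := rfl
          rw [h3, h4] at h2
          omega) h0L
      have hCLne : (swap jf L * c) L ≠ L := by
        rw [hCL]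
        exact h0L
      have e2 := delEquiv hCLne
      have hre : ∀ ρ : Perm (Fin (a+b+2+1)),
          ddLe ρ (swap L ((swap jf L * c) L) * (swap jf L * c)) ↔ ddLe ρ (A' * B) := by
        intro ρ
        rw [hCL, hswapLc, ← mul_assoc, swap_mul_self, one_mul]
      have e3 := Equiv.subtypeEquivRight hre
      have e4 := prodSplit hsuppA hsuppB
      have := Nat.card_congr (((e1.trans e2).trans e3).trans e4)
      rw [this, Nat.card_prod]
      have c1 : Nat.card {π : Perm (Fin (a+b+2+1)) // ddLe π A'} = NN (a+1) :=
        card_viaE_embS (a+b+2) 0 (a+1) (by omega)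
      have c2 : Nat.card {π : Perm (Fin (a+b+2+1)) // ddLe π B} = NN (b+1) :=
        card_viaE_embS (a+b+2) (a+1) (b+1) (by omega)
      rw [c1, c2]
      have : (⟨a+1, by omega⟩ : Fin (a+b+2+1)).val = a + 1 := rfl
      rw [this]
      congr 1
      congr 1
      omega

lemma NN_succ (n : ℕ) (hn : 1 ≤ n) :
    NN (n+1) = ∑ j : Fin (n+1), NN j.val * NN (n - j.val) := by
  classical
  rw [NN, Nat.card_congr (fiberEquiv (fun π : Perm (Fin (n+1)) => ddLe π (finRotate (n+1)))
    (fun π => π (Fin.last n))), nat_card_sigma]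
  exact Finset.sum_congr rfl fun j _ => fiber_count n hn j

theorem NN_eq_catalan (m : ℕ) : NN m = catalan m := by
  induction m using Nat.strong_induction_on with
  | _ m ih =>
    match m, ih with
    | 0, _ => rw [NN_zero, catalan_zero]
    | 1, _ => rw [NN_one, catalan_one]
    | (n+2), ih => 
      rw [NN_succ (n+1) (by omega), catalan_succ (n+1)]
      apply Finset.sum_congr rfl
      intro j _
      have h1 := j.isLt
      rw [ih j.val (by omega), ih (n+1 - j.val) (by omega)]

end Main

end AbsCat


/-- The interval `[1, w]` in absolute order on `S_n`, `w = (1 2 ... n)`, has cardinality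
the Catalan number `C_n`. -/
theorem card_interval_eq_catalan (n : ℕ) :
    Nat.card {π : Perm (Fin n) // absLe π (finRotate n)} = catalan n := by
  have h : ∀ π : Perm (Fin n), absLe π (finRotate n) ↔ AbsCat.ddLe π (finRotate n) := fun π =>
    AbsCat.absLe_iff_dd π (finRotate n)
  rw [Nat.card_congr (Equiv.subtypeEquivRight h)]
  exact AbsCat.NN_eq_catalan n
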